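/- Let u : ℝⁿ → ℝ be a C² function on the closed ball B̄(0, 1/2) ⊂ ℝⁿ satisfying Δu = v (where Δu = Σᵢ ∂²u/∂xᵢ² is the Euclidean Laplacian). Then there is a constant C depending only on n such that |∇u(0)| ≤ C(‖u‖_{L^∞(B̄(0,1/2))} + ‖v‖_{L^∞(B̄(0,1/2))}). -/

import Mathlib

open Metric Filter Set Topology EuclideanSpace

section Aux

variable {n : ℕ}

local notation "E" => EuclideanSpace ℝ (Fin n)

noncomputable def Qf (a b c : ℝ) (i : Fin n) : E → ℝ :=
  fun x => a * ∑ j, (x j)^2 + (b * (x i) + c * ((x i) * (x i)))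

noncomputable def QD (a b c : ℝ) (i : Fin n) (x : E) : E →L[ℝ] ℝ :=
  a • (∑ j, (2 * x j) • (EuclideanSpace.proj j : E →L[ℝ] ℝ))
    + (b + 2*c*x i) • (EuclideanSpace.proj i : E →L[ℝ] ℝ)

noncomputable def Q2 (a c : ℝ) (i j : Fin n) : E →L[ℝ] ℝ :=
  (2*a) • (EuclideanSpace.proj j : E →L[ℝ] ℝ)
    + (if i = j then (2*c) • (EuclideanSpace.proj i : E →L[ℝ] ℝ) else 0)

noncomputable def Refl (i : Fin n) : E →L[ℝ] E :=
  ContinuousLinearMap.id ℝ _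
    - (2:ℝ) • ((EuclideanSpace.proj i : E →L[ℝ] ℝ).smulRight (EuclideanSpace.single i 1))

def sgn (i j : Fin n) : ℝ := if j = i then -1 else 1

noncomputable def Hrow (u : E → ℝ) (j : Fin n) (x : E) : E →L[ℝ] ℝ :=
  fderiv ℝ (fun y => fderiv ℝ u y (EuclideanSpace.single j 1)) x

noncomputable def wfun (u : E → ℝ) (i : Fin n) : E → ℝ := fun x => u x - u (Refl i x)

noncomputable def wD (u : E → ℝ) (i : Fin n) (x : E) : E →L[ℝ] ℝ :=
  fderiv ℝ u x - (fderiv ℝ u (Refl i x)).comp (Refl i)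

noncomputable def w2 (u : E → ℝ) (i j : Fin n) (x : E) : E →L[ℝ] ℝ :=
  Hrow u j x - sgn i j • (Hrow u j (Refl i x)).comp (Refl i)


lemma hasFDerivAt_Qf (a b c : ℝ) (i : Fin n) (x : E) :
    HasFDerivAt (Qf a b c i) (QD a b c i x) x := by
  have hproj : ∀ j : Fin n, HasFDerivAt (fun y : E => y j)
      (EuclideanSpace.proj j : E →L[ℝ] ℝ) x := fun j =>
    (EuclideanSpace.proj j : E →L[ℝ] ℝ).hasFDerivAt
  have h1 : HasFDerivAt (fun y : E => ∑ j, (y j)^2)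
      (∑ j, (2 * x j) • (EuclideanSpace.proj j : E →L[ℝ] ℝ)) x := by
    refine HasFDerivAt.fun_sum fun j _ => ?_
    have h0 := (hproj j).fun_mul (hproj j)
    have h2 : (fun y : E => (y j) * (y j)) = fun y : E => (y j)^2 := by
      funext y; ring
    rw [h2] at h0
    refine h0.congr_fderiv ?_
    ext z
    simp only [ContinuousLinearMap.add_apply, ContinuousLinearMap.smul_apply, smul_eq_mul]
    ring
  have h2 := (h1.const_mul a).add (((hproj i).const_mul b).add
    (((hproj i).mul (hproj i)).const_mul c))
  refine h2.congr_fderiv ?_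
  ext z
  simp only [QD, ContinuousLinearMap.add_apply, ContinuousLinearMap.smul_apply, smul_eq_mul]
  ring

lemma QD_apply (a b c : ℝ) (i : Fin n) (x : E) (j : Fin n) :
    QD a b c i x (EuclideanSpace.single j 1)
      = 2*a*(x j) + (if i = j then b + 2*c*x i else 0) := by
  have hps : ∀ k : Fin n, (EuclideanSpace.proj k : E →L[ℝ] ℝ) (EuclideanSpace.single j 1)
      = if k = j then 1 else 0 := by
    intro k
    simp [EuclideanSpace.single_apply]
  simp only [QD, ContinuousLinearMap.add_apply, ContinuousLinearMap.smul_apply,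
    ContinuousLinearMap.sum_apply, hps, smul_eq_mul, mul_ite, mul_one, mul_zero]
  rw [Finset.sum_ite_eq' Finset.univ j (fun k => 2 * x k)]
  by_cases h : i = j
  · simp [h]; ring
  · simp [h, Ne.symm h]; ring

lemma hasFDerivAt_QD_apply (a b c : ℝ) (i j : Fin n) (x : E) :
    HasFDerivAt (fun y : E => QD a b c i y (EuclideanSpace.single j 1)) (Q2 a c i j) x := by
  have hproj : ∀ k : Fin n, HasFDerivAt (fun y : E => y k)
      (EuclideanSpace.proj k : E →L[ℝ] ℝ) x := fun k =>
    (EuclideanSpace.proj k : E →L[ℝ] ℝ).hasFDerivAt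
  have heq : (fun y : E => QD a b c i y (EuclideanSpace.single j 1))
      = fun y : E => 2*a*(y j) + (if i = j then b + 2*c*y i else 0) := by
    funext y; exact QD_apply a b c i y j
  rw [heq]
  by_cases h : i = j
  · simp only [h, if_pos rfl, Q2, if_pos rfl]
    subst h
    have h0 := ((hproj i).const_mul (2*a)).fun_add (((hproj i).const_mul (2*c)).add_const b)
    have h1 : (fun y : E => 2*a*(y i) + (2*c*(y i) + b))
        = fun y : E => 2*a*(y i) + (b + 2*c*y i) := by funext y; ring
    rw [h1] at h0
    refine h0.congr_fderiv ?_
    ext z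
    simp [smul_eq_mul]
  · simp only [if_neg h, Q2, if_neg h, add_zero]
    have h0 := ((hproj j).const_mul (2*a)).add_const 0
    have h1 : (fun y : E => 2*a*(y j) + 0) = fun y : E => 2*a*(y j) := by funext y; ring
    rw [h1] at h0
    exact h0

lemma Q2_lap (a c : ℝ) (i : Fin n) :
    ∑ j, Q2 a c i j (EuclideanSpace.single j 1) = 2*n*a + 2*c := by
  have hval : ∀ j : Fin n, Q2 a c i j (EuclideanSpace.single j 1)
      = 2*a + (if i = j then 2*c else 0) := by
    intro j
    by_cases h : i = j
    · subst h
      simp [Q2, EuclideanSpace.single_apply]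
    · simp [Q2, h, EuclideanSpace.single_apply]
  simp only [hval, Finset.sum_add_distrib, Finset.sum_ite_eq]
  have hi : i ∈ Finset.univ := Finset.mem_univ i
  simp [Finset.sum_const, Finset.card_univ]
  ring

lemma Refl_apply (i : Fin n) (x : E) (j : Fin n) :
    Refl i x j = if j = i then -(x i) else x j := by
  simp only [Refl, ContinuousLinearMap.sub_apply, ContinuousLinearMap.id_apply,
    ContinuousLinearMap.smul_apply, ContinuousLinearMap.smulRight_apply]
  have : ((2:ℝ) • ((EuclideanSpace.proj i : E →L[ℝ] ℝ) x • EuclideanSpace.single i (1:ℝ))) j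
      = 2 * (x i) * (EuclideanSpace.single i (1:ℝ) j) := by
    simp [smul_smul]
  rw [PiLp.sub_apply, this, EuclideanSpace.single_apply]
  by_cases h : j = i
  · subst h; simp; ring
  · simp [h]

lemma Refl_sumsq (i : Fin n) (x : E) : ∑ j, (Refl i x j)^2 = ∑ j, (x j)^2 := by
  refine Finset.sum_congr rfl fun j _ => ?_
  rw [Refl_apply]
  by_cases h : j = i
  · subst h; simp
  · simp [h]

lemma Refl_norm (i : Fin n) (x : E) : ‖Refl i x‖ = ‖x‖ := by
  rw [EuclideanSpace.norm_eq, EuclideanSpace.norm_eq]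
  congr 1
  have := Refl_sumsq i x
  simpa [Real.norm_eq_abs, sq_abs] using this

lemma Refl_single (i j : Fin n) :
    Refl i (EuclideanSpace.single j 1)
      = (if j = i then (-1:ℝ) else 1) • EuclideanSpace.single j (1:ℝ) := by
  apply PiLp.ext
  intro k
  rw [Refl_apply]
  rcases eq_or_ne j i with rfl | hji
  · simp [EuclideanSpace.single_apply, PiLp.smul_apply]
    rcases eq_or_ne k j with rfl | hkj
    · simp
    · simp [hkj]
  · simp only [if_neg, hji, PiLp.smul_apply, EuclideanSpace.single_apply, ite_smul]
    rcases eq_or_ne k i with rfl | hki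
    · simp [Ne.symm hji, hji]
    · simp [hki]

lemma Refl_fixed (i : Fin n) (x : E) (hx : x i = 0) : Refl i x = x := by
  apply PiLp.ext
  intro k
  rw [Refl_apply]
  rcases eq_or_ne k i with rfl | hki
  · simp [hx]
  · simp [hki]

/-- Second derivative test: at an interior local max, the second derivative is ≤ 0. -/
theorem secondDeriv_nonpos_of_isLocalMax {h d : ℝ → ℝ} {d2 : ℝ} {δ : ℝ} (hδ : 0 < δ)
    (hd : ∀ t ∈ Ioo (-δ) δ, HasDerivAt h (d t) t)
    (hd2 : HasDerivAt d d2 0) (hmax : IsLocalMax h 0) : d2 ≤ 0 := by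
  by_contra hpos
  push_neg at hpos
  have hd0 : d 0 = 0 := by
    have := hmax.hasDerivAt_eq_zero (hd 0 (by constructor <;> linarith))
    simpa using this
  -- d is eventually positive on the right of 0
  have h1 : ∀ᶠ t in 𝓝[>] (0:ℝ), 0 < d t := by
    have := hd2.hasDerivWithinAt (s := Ioi (0:ℝ))
    rw [hasDerivWithinAt_iff_tendsto_slope] at this
    have hev : ∀ᶠ t in 𝓝[Ioi (0:ℝ) \ {0}] (0:ℝ), d2/2 < slope d 0 t :=
      this (Ioi_mem_nhds (by linarith))
    have hss : Ioi (0:ℝ) ⊆ Ioi (0:ℝ) \ {0} := fun t ht => ⟨ht, ne_of_gt ht⟩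
    have hev2 : ∀ᶠ t in 𝓝[>] (0:ℝ), d2 / 2 < slope d 0 t :=
      hev.filter_mono (nhdsWithin_mono _ hss)
    filter_upwards [hev2, self_mem_nhdsWithin] with t hts ht
    have ht' : (0:ℝ) < t := ht
    have hs : slope d 0 t = d t / t := by simp [slope_def_field, hd0]
    rw [hs] at hts
    have h3 : 0 < d t / t := lt_trans (by linarith) hts
    rcases div_pos_iff.mp h3 with ⟨h4, _⟩ | ⟨_, h4⟩
    · exact h4
    · linarith
  -- hence h is strictly increasing on a right interval, contradicting local max
  obtain ⟨ε, hε, hεd⟩ := (nhdsGT_basis (0:ℝ)).eventually_iff.mp h1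
  set ε' := min ε δ with hε'
  have hε'pos : 0 < ε' := lt_min hε hδ
  have hmono : StrictMonoOn h (Icc 0 (ε'/2)) := by
    apply strictMonoOn_of_hasDerivWithinAt_pos (convex_Icc _ _)
    · intro t ht
      exact ((hd t ⟨by linarith [ht.1], by
        have := ht.2; have : t ≤ ε'/2 := this; have := min_le_right ε δ; linarith⟩).continuousAt).continuousWithinAt
    · intro t ht
      rw [interior_Icc] at ht
      refine ((hd t ⟨by linarith [ht.1], ?_⟩).hasDerivWithinAt)
      have := ht.2; have := min_le_right ε δ; linarith
    · intro t ht
      rw [interior_Icc] at ht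
      refine hεd ⟨ht.1, ?_⟩
      have := ht.2; have := min_le_left ε δ; linarith
  have hlt : h 0 < h (ε'/2) := hmono ⟨le_refl _, by linarith⟩ ⟨by linarith, le_refl _⟩ (by linarith)
  -- but local max says h t ≤ h 0 near 0
  obtain ⟨ρ, hρ, hρd⟩ := Metric.eventually_nhds_iff.mp hmax
  set t := min (ε'/2) (ρ/2) with ht
  have htpos : 0 < t := lt_min (by linarith) (by linarith)
  have h5 : h t ≤ h 0 := hρd (by
    simp only [Real.dist_eq, sub_zero, abs_of_pos htpos]
    calc t ≤ ρ/2 := min_le_right _ _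
    _ < ρ := by linarith)
  have h6 : h 0 < h t := by
    rcases eq_or_lt_of_le (min_le_left (ε'/2) (ρ/2)) with he | hl
    · rw [ht, he]; exact hlt
    · exact hmono ⟨le_refl _, by linarith⟩ ⟨le_of_lt htpos, min_le_left _ _⟩ htpos
  linarith

/-- If `h t ≤ h 0` for `t ∈ [0, δ)` and `h` has derivative `m` at `0`, then `m ≤ 0`. -/
theorem deriv_nonpos_of_right_max {h : ℝ → ℝ} {m δ : ℝ} (hδ : 0 < δ)
    (hle : ∀ t ∈ Ico (0:ℝ) δ, h t ≤ h 0) (hm : HasDerivAt h m 0) : m ≤ 0 := by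
  have hw := (hm.hasDerivWithinAt (s := Ioi (0:ℝ)))
  rw [hasDerivWithinAt_iff_tendsto_slope] at hw
  have hss : Ioi (0:ℝ) ⊆ Ioi (0:ℝ) \ {0} := fun t ht => ⟨ht, ne_of_gt ht⟩
  have hw2 : Tendsto (slope h 0) (𝓝[>] (0:ℝ)) (𝓝 m) := hw.mono_left (nhdsWithin_mono _ hss)
  refine le_of_tendsto hw2 ?_
  filter_upwards [Ioo_mem_nhdsGT hδ] with t ht
  have : h t - h 0 ≤ 0 := by linarith [hle t ⟨le_of_lt ht.1, ht.2⟩]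
  rw [slope_def_field]
  have := div_nonpos_of_nonpos_of_nonneg this (le_of_lt ht.1)
  simpa [div_eq_mul_inv] using this

/-- Maximum principle: a function with positive Laplacian on a bounded open set,
nonpositive on the boundary, is nonpositive. -/
theorem maxPrinciple {D : Set E} (hD : IsOpen D) (hb : Bornology.IsBounded D)
    {g : E → ℝ} {g' : E → E →L[ℝ] ℝ} {g2 : Fin n → E → E →L[ℝ] ℝ}
    (hc : ContinuousOn g (closure D))
    (hg' : ∀ x ∈ D, HasFDerivAt g (g' x) x)
    (hg2 : ∀ x ∈ D, ∀ j, HasFDerivAt (fun y => g' y (EuclideanSpace.single j 1)) (g2 j x) x)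
    (hpos : ∀ x ∈ D, 0 < ∑ j, g2 j x (EuclideanSpace.single j 1))
    (hbd : ∀ x ∈ closure D \ D, g x ≤ 0) :
    ∀ x ∈ closure D, g x ≤ 0 := by
  rcases D.eq_empty_or_nonempty with rfl | hne
  · simp
  obtain ⟨x₀, hx₀mem, hmax⟩ :=
    hb.isCompact_closure.exists_isMaxOn (hne.closure) hc
  by_cases hx₀ : x₀ ∈ D
  · exfalso
    -- local max at interior point with positive Laplacian: contradiction
    have hloc : IsLocalMax g x₀ := by
      filter_upwards [hD.mem_nhds hx₀] with y hy
      exact hmax (subset_closure hy)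
    -- second derivative test along each coordinate line
    have key : ∀ j, g2 j x₀ (EuclideanSpace.single j 1) ≤ 0 := by
      intro j
      set e : E := EuclideanSpace.single j 1 with he
      set L : ℝ → E := fun t => x₀ + t • e with hL
      have hLd : ∀ t : ℝ, HasDerivAt L e t := fun t => by
        simpa [hL] using ((hasDerivAt_id t).smul_const e).const_add x₀
      have hL0 : L 0 = x₀ := by simp [hL]
      have hLc : Continuous L := by continuity
      -- δ such that L t ∈ D for |t| < δ
      obtain ⟨δ, hδ, hδD⟩ : ∃ δ > 0, ∀ t ∈ Ioo (-δ) δ, L t ∈ D := by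
        have : L ⁻¹' D ∈ 𝓝 (0:ℝ) := by
          apply hLc.continuousAt.preimage_mem_nhds
          rw [hL0]; exact hD.mem_nhds hx₀
        obtain ⟨δ, hδ, hball⟩ := Metric.mem_nhds_iff.mp this
        exact ⟨δ, hδ, fun t ht => hball (by
          simp only [mem_ball, Real.dist_eq, sub_zero]
          exact abs_lt.mpr ⟨ht.1, ht.2⟩)⟩
      have hh : ∀ t ∈ Ioo (-δ) δ, HasDerivAt (g ∘ L) ((g' (L t)) e) t := fun t ht =>
        (hg' (L t) (hδD t ht)).comp_hasDerivAt t (hLd t)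
      have hd2 : HasDerivAt (fun t => g' (L t) e) ((g2 j x₀) e) 0 := by
        have h0 : HasDerivAt L e 0 := hLd 0
        rw [show (0:ℝ) = 0 from rfl] at h0
        have := HasFDerivAt.comp_hasDerivAt (x := (0:ℝ)) (f := L)
          (by rw [hL0]; exact hg2 x₀ hx₀ j) h0
        exact this
      have hlm : IsLocalMax (g ∘ L) 0 := by
        have : ∀ᶠ t in 𝓝 (0:ℝ), L t ∈ D := by
          apply hLc.continuousAt.eventually_mem
          rw [hL0]; exact hD.mem_nhds hx₀
        filter_upwards [this] with t ht
        have := hmax (subset_closure ht)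
        simpa [hL0] using this
      exact secondDeriv_nonpos_of_isLocalMax hδ hh hd2 hlm
    have : ∑ j, g2 j x₀ (EuclideanSpace.single j 1) ≤ 0 :=
      Finset.sum_nonpos fun j _ => key j
    linarith [hpos x₀ hx₀]
  · intro x hx
    exact le_trans (hmax hx) (hbd x₀ ⟨hx₀mem, hx₀⟩)

lemma sgn_sq (i j : Fin n) : sgn i j * sgn i j = 1 := by
  unfold sgn; by_cases h : j = i <;> simp [h]

lemma norm_sq_eq_sumsq (x : E) : ‖x‖^2 = ∑ j, (x j)^2 := by
  rw [EuclideanSpace.norm_eq, Real.sq_sqrt (by positivity)]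
  exact Finset.sum_congr rfl fun j _ => by simp [Real.norm_eq_abs, sq_abs]

set_option maxHeartbeats 1000000 in
/-- The key one-coordinate estimate. -/
lemma coord_bound (i : Fin n) (u v : (E) → ℝ) (A B : ℝ)
    (hu : ContDiffOn ℝ 2 u (closedBall 0 (1/2)))
    (hlap : ∀ x ∈ ball (0:E) (1/2),
      (∑ j, fderiv ℝ (fun y => fderiv ℝ u y (EuclideanSpace.single j 1)) x
        (EuclideanSpace.single j 1)) = v x)
    (hA : ∀ x ∈ closedBall (0:E) (1/2), |u x| ≤ A)
    (hB : ∀ x ∈ ball (0:E) (1/2), |v x| ≤ B) :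
    fderiv ℝ u 0 (EuclideanSpace.single i 1) ≤ 2*n*A + B/4 := by
  have hA0 : 0 ≤ A := le_trans (abs_nonneg _) (hA 0 (mem_closedBall_self (by norm_num)))
  have hB0 : 0 ≤ B := le_trans (abs_nonneg _) (hB 0 (mem_ball_self (by norm_num)))
  -- basic differentiability facts on the open ball
  have hball : ∀ x : E, x ∈ ball (0:E) (1/2) → ContDiffAt ℝ 2 u x := fun x hx =>
    hu.contDiffAt (Filter.mem_of_superset (isOpen_ball.mem_nhds hx) ball_subset_closedBall)
  have hdiff : ∀ x ∈ ball (0:E) (1/2), DifferentiableAt ℝ u x := fun x hx =>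
    (hball x hx).differentiableAt two_ne_zero
  have hd1 : ∀ x ∈ ball (0:E) (1/2), ∀ j : Fin n,
      DifferentiableAt ℝ (fun y => fderiv ℝ u y (EuclideanSpace.single j 1)) x := by
    intro x hx j
    have h1 : ContDiffAt ℝ 1 (fderiv ℝ u) x :=
      (hball x hx).fderiv_right (by norm_num)
    have h2 : ContDiffAt ℝ 1 (fun y => fderiv ℝ u y (EuclideanSpace.single j 1)) x :=
      (ContinuousLinearMap.apply ℝ ℝ
        (EuclideanSpace.single j (1:ℝ))).contDiff.contDiffAt.comp x h1
    exact h2.differentiableAt one_ne_zero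
  have hRmem : ∀ x : E, x ∈ ball (0:E) (1/2) → Refl i x ∈ ball (0:E) (1/2) := by
    intro x hx
    simpa [mem_ball_zero_iff, Refl_norm] using hx
  have hRmem' : ∀ x : E, x ∈ closedBall (0:E) (1/2) → Refl i x ∈ closedBall (0:E) (1/2) := by
    intro x hx
    simpa [mem_closedBall_zero_iff, Refl_norm] using hx
  -- derivative facts for w
  have hw' : ∀ x ∈ ball (0:E) (1/2), HasFDerivAt (wfun u i) (wD u i x) x := by
    intro x hx
    exact ((hdiff x hx).hasFDerivAt).sub
      (((hdiff _ (hRmem x hx)).hasFDerivAt).comp x (Refl i).hasFDerivAt)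
  have hwD_apply : ∀ (x : E) (j : Fin n), wD u i x (EuclideanSpace.single j 1)
      = fderiv ℝ u x (EuclideanSpace.single j 1)
        - sgn i j * fderiv ℝ u (Refl i x) (EuclideanSpace.single j 1) := by
    intro x j
    simp only [wD, ContinuousLinearMap.sub_apply, ContinuousLinearMap.comp_apply,
      Refl_single, sgn, map_smul, smul_eq_mul]
  have hw2 : ∀ x ∈ ball (0:E) (1/2), ∀ j : Fin n,
      HasFDerivAt (fun y => wD u i y (EuclideanSpace.single j 1)) (w2 u i j x) x := by
    intro x hx j
    have heq : (fun y => wD u i y (EuclideanSpace.single j 1))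
        = fun y => fderiv ℝ u y (EuclideanSpace.single j 1)
          - sgn i j * fderiv ℝ u (Refl i y) (EuclideanSpace.single j 1) := by
      funext y; exact hwD_apply y j
    rw [heq]
    have h1 : HasFDerivAt (fun y => fderiv ℝ u y (EuclideanSpace.single j 1))
        (Hrow u j x) x := (hd1 x hx j).hasFDerivAt
    have h2 : HasFDerivAt (fun y => fderiv ℝ u (Refl i y) (EuclideanSpace.single j 1))
        ((Hrow u j (Refl i x)).comp (Refl i)) x :=
      ((hd1 _ (hRmem x hx) j).hasFDerivAt).comp x (Refl i).hasFDerivAt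
    have h3 := h1.sub (h2.const_mul (sgn i j))
    unfold w2
    exact h3
  have hw2_lap : ∀ x ∈ ball (0:E) (1/2),
      ∑ j, w2 u i j x (EuclideanSpace.single j 1) = v x - v (Refl i x) := by
    intro x hx
    have hterm : ∀ j : Fin n, w2 u i j x (EuclideanSpace.single j 1)
        = fderiv ℝ (fun y => fderiv ℝ u y (EuclideanSpace.single j 1)) x
            (EuclideanSpace.single j 1)
          - fderiv ℝ (fun y => fderiv ℝ u y (EuclideanSpace.single j 1)) (Refl i x)
            (EuclideanSpace.single j 1) := by
      intro j
      simp only [w2, Hrow, ContinuousLinearMap.sub_apply, ContinuousLinearMap.smul_apply,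
        ContinuousLinearMap.comp_apply, Refl_single, map_smul, smul_eq_mul]
      have := sgn_sq i j
      unfold sgn at this ⊢
      by_cases h : j = i <;> simp [h]
    rw [Finset.sum_congr rfl fun j _ => hterm j, Finset.sum_sub_distrib,
      hlap x hx, hlap _ (hRmem x hx)]
  -- it suffices to prove the bound up to an arbitrary ε > 0
  have key : ∀ ε : ℝ, 0 < ε → fderiv ℝ u 0 (EuclideanSpace.single i 1) ≤ 2*n*A + B/4 + ε := by
    intro ε hε
    obtain ⟨a, ha⟩ : ∃ a : ℝ, a = 8*A := ⟨_, rfl⟩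
    obtain ⟨b, hb⟩ : ∃ b : ℝ, b = 4*n*A + B/2 + 2*ε := ⟨_, rfl⟩
    obtain ⟨c, hc⟩ : ∃ c : ℝ, c = -(8*n*A) - B - 4*ε := ⟨_, rfl⟩
    set D : Set E := ball (0:E) (1/2) ∩ {x : E | 0 < x i} with hD
    have hDo : IsOpen D := isOpen_ball.inter
      (isOpen_lt continuous_const (EuclideanSpace.proj i : E →L[ℝ] ℝ).continuous)
    have hDb : Bornology.IsBounded D := (isBounded_ball).subset inter_subset_left
    have hDsub : D ⊆ ball (0:E) (1/2) := inter_subset_left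
    have hclos : closure D ⊆ closedBall (0:E) (1/2) :=
      le_trans (closure_mono inter_subset_left) closure_ball_subset_closedBall
    have hclos2 : ∀ x ∈ closure D, 0 ≤ x i := by
      intro x hx
      have hsub : closure D ⊆ {y : E | 0 ≤ y i} := by
        apply closure_minimal
        · intro y hy
          have : (0:ℝ) < y i := hy.2
          exact le_of_lt this
        · exact isClosed_le continuous_const (EuclideanSpace.proj i : E →L[ℝ] ℝ).continuous
      exact hsub hx
    set g : E → ℝ := fun x => wfun u i x - Qf a b c i x with hg
    set g' : E → E →L[ℝ] ℝ := fun x => wD u i x - QD a b c i x with hg'def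
    set g2 : Fin n → E → E →L[ℝ] ℝ := fun j x => w2 u i j x - Q2 a c i j with hg2def
    -- continuity
    have huc : ContinuousOn u (closedBall (0:E) (1/2)) := hu.continuousOn
    have hcg : ContinuousOn g (closure D) := by
      apply ContinuousOn.mono _ hclos
      apply ContinuousOn.sub
      · exact huc.sub (huc.comp ((Refl i).continuous.continuousOn) hRmem')
      · exact Continuous.continuousOn (continuous_iff_continuousAt.mpr
          fun x => (hasFDerivAt_Qf a b c i x).continuousAt)
    have hgd : ∀ x ∈ D, HasFDerivAt g (g' x) x := fun x hx =>
      (hw' x (hDsub hx)).sub (hasFDerivAt_Qf a b c i x)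
    have hgd2 : ∀ x ∈ D, ∀ j, HasFDerivAt (fun y => g' y (EuclideanSpace.single j 1))
        (g2 j x) x := by
      intro x hx j
      have heq : (fun y => g' y (EuclideanSpace.single j 1))
          = fun y => wD u i y (EuclideanSpace.single j 1)
              - QD a b c i y (EuclideanSpace.single j 1) := by
        funext y; simp [hg'def]
      rw [heq]
      exact (hw2 x (hDsub hx) j).sub (hasFDerivAt_QD_apply a b c i j x)
    -- positivity of the Laplacian of g
    have hpos : ∀ x ∈ D, 0 < ∑ j, g2 j x (EuclideanSpace.single j 1) := by
      intro x hx
      have hsum : ∑ j, g2 j x (EuclideanSpace.single j 1)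
          = (v x - v (Refl i x)) - (2*n*a + 2*c) := by
        simp only [hg2def, ContinuousLinearMap.sub_apply, Finset.sum_sub_distrib]
        rw [hw2_lap x (hDsub hx), Q2_lap]
      rw [hsum]
      have h1 := abs_le.mp (hB x (hDsub hx))
      have h2 := abs_le.mp (hB _ (hRmem x (hDsub hx)))
      have : 2*n*a + 2*c = 16*n*A + (-(16*n*A) - 2*B - 8*ε) := by
        rw [ha, hc]; ring
      rw [this]
      linarith
    -- boundary condition
    have hbd : ∀ x ∈ closure D \ D, g x ≤ 0 := by
      rintro x ⟨hxc, hxD⟩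
      have hxi : 0 ≤ x i := hclos2 x hxc
      have hxcb : x ∈ closedBall (0:E) (1/2) := hclos hxc
      by_cases hxi0 : 0 < x i
      · -- then x is on the sphere
        have hxnb : x ∉ ball (0:E) (1/2) := fun hxb => hxD ⟨hxb, hxi0⟩
        have hxn : ‖x‖ = 1/2 := le_antisymm (mem_closedBall_zero_iff.mp hxcb)
          (not_lt.mp (fun hlt => hxnb (mem_ball_zero_iff.mpr hlt)))
        have hsum : ∑ j, (x j)^2 = 1/4 := by
          have := norm_sq_eq_sumsq x
          rw [hxn] at this; norm_num at this; linarith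
        have hxile : x i ≤ 1/2 := by
          have hle : (x i)^2 ≤ ∑ j, (x j)^2 :=
            Finset.single_le_sum (fun j _ => sq_nonneg (x j)) (Finset.mem_univ i)
          nlinarith
        have hw_le : wfun u i x ≤ 2*A := by
          have h1 := abs_le.mp (hA x hxcb)
          have h2 := abs_le.mp (hA _ (hRmem' x hxcb))
          simp only [wfun]; linarith
        have hQ_ge : Qf a b c i x ≥ 2*A := by
          simp only [Qf, hsum]
          have hbc : b + c * (1/2) = 0 := by rw [hb, hc]; ring
          have hcn : c ≤ 0 := by
            rw [hc]
            nlinarith [mul_nonneg (Nat.cast_nonneg n : (0:ℝ) ≤ (n:ℝ)) hA0]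
          have hfac : 0 ≤ x i * (b + c * x i) := by
            apply mul_nonneg hxi
            have h5 : c * (1/2) ≤ c * (x i) := mul_le_mul_of_nonpos_left hxile hcn
            linarith
          rw [ha]; nlinarith
        simp only [hg]; linarith
      · -- then x i = 0 and w vanishes
        have hxi0' : x i = 0 := le_antisymm (not_lt.mp hxi0) hxi
        have hwx : wfun u i x = 0 := by
          simp [wfun, Refl_fixed i x hxi0']
        have hQ0 : 0 ≤ Qf a b c i x := by
          simp only [Qf, hxi0', mul_zero, zero_mul, add_zero, mul_comm]
          have : 0 ≤ ∑ j, (x j)^2 := Finset.sum_nonneg fun j _ => sq_nonneg _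
          rw [ha]; positivity
        simp only [hg]; linarith
    -- maximum principle
    have hmaxp := maxPrinciple hDo hDb hcg hgd hgd2 hpos hbd
    -- restrict to the segment t • single i 1
    obtain ⟨e, he⟩ : ∃ e : E, e = EuclideanSpace.single i 1 := ⟨_, rfl⟩
    have hsegD : ∀ t : ℝ, t ∈ Ioo (0:ℝ) (1/2) → t • e ∈ D := by
      intro t ht
      constructor
      · rw [mem_ball_zero_iff, norm_smul, he, EuclideanSpace.norm_single]
        rw [norm_one, mul_one, Real.norm_eq_abs, abs_of_pos ht.1]
        exact ht.2
      · show 0 < (t • e) i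
        rw [PiLp.smul_apply, he, EuclideanSpace.single_apply]
        simpa using ht.1
    have hg0 : g 0 = 0 := by
      have hR0 : Refl i (0:E) = 0 := map_zero _
      have hQ0 : Qf a b c i 0 = 0 := by
        simp [Qf]
      simp [hg, wfun, hR0, hQ0]
    have hle : ∀ t ∈ Ico (0:ℝ) (1/2), (fun t : ℝ => g (t • e)) t ≤ (fun t : ℝ => g (t • e)) 0 := by
      intro t ht
      simp only [zero_smul, hg0]
      rcases eq_or_lt_of_le ht.1 with rfl | htpos
      · simp [hg0]
      · exact hmaxp _ (subset_closure (hsegD t ⟨htpos, ht.2⟩))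
    have hm : HasDerivAt (fun t : ℝ => g (t • e)) (g' 0 e) 0 := by
      have hL : HasDerivAt (fun t : ℝ => t • e) e 0 := by
        simpa using (hasDerivAt_id (0:ℝ)).smul_const e
      have h0 : HasFDerivAt g (g' 0) 0 :=
        (hw' 0 (mem_ball_self (by norm_num))).sub (hasFDerivAt_Qf a b c i 0)
      have h0' : HasFDerivAt g (g' 0) ((fun t : ℝ => t • e) 0) := by
        simpa using h0
      exact h0'.comp_hasDerivAt 0 hL
    have hfin := deriv_nonpos_of_right_max (by norm_num : (0:ℝ) < 1/2) hle hm
    -- compute g' 0 e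
    have hval : g' 0 e = 2 * fderiv ℝ u 0 e - b := by
      have hR0 : Refl i (0:E) = 0 := map_zero _
      have h0i : (0:E) i = 0 := rfl
      simp only [hg'def, ContinuousLinearMap.sub_apply]
      rw [he, hwD_apply, QD_apply, hR0]
      simp only [h0i, sgn, eq_self_iff_true, if_true, mul_zero, add_zero, zero_add]
      ring
    rw [hval] at hfin
    have : fderiv ℝ u 0 e ≤ b/2 := by linarith
    rw [he] at this
    rw [hb] at this
    linarith
  by_contra hcon
  push_neg at hcon
  have := key ((fderiv ℝ u 0 (EuclideanSpace.single i 1) - (2*n*A + B/4))/2) (by linarith)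
  linarith

end Aux

/-- Interior gradient estimate on the unit-scale ball: if `Δu = v` on
`B̄(0, 1/2)`, then `|∇u(0)| ≤ C(‖u‖_∞ + ‖v‖_∞)` with `C = C(n)`. -/
theorem interior_gradient_estimate (n : ℕ) :
    ∃ C > 0, ∀ (u v : EuclideanSpace ℝ (Fin n) → ℝ) (A B : ℝ),
      ContDiffOn ℝ 2 u (closedBall 0 (1/2)) →
      (∀ x ∈ closedBall (0 : EuclideanSpace ℝ (Fin n)) (1/2),
        (∑ i, fderiv ℝ (fun y => fderiv ℝ u y (single i 1)) x (single i 1)) = v x) →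
      (∀ x ∈ closedBall (0 : EuclideanSpace ℝ (Fin n)) (1/2), |u x| ≤ A) →
      (∀ x ∈ closedBall (0 : EuclideanSpace ℝ (Fin n)) (1/2), |v x| ≤ B) →
      ‖gradient u 0‖ ≤ C * (A + B) := by
  refine ⟨2*(n:ℝ)^2 + n + 1, by positivity, ?_⟩
  intro u v A B hu hlap hA hB
  have hA0 : 0 ≤ A := le_trans (abs_nonneg _) (hA 0 (mem_closedBall_self (by norm_num)))
  have hB0 : 0 ≤ B := le_trans (abs_nonneg _) (hB 0 (mem_closedBall_self (by norm_num)))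
  rcases Nat.eq_zero_or_pos n with hn | hn
  · subst hn
    have hy : (gradient u 0 : EuclideanSpace ℝ (Fin 0)) = 0 := Subsingleton.elim _ _
    rw [hy, norm_zero]
    nlinarith
  have hn1 : (1:ℝ) ≤ (n:ℝ) := by exact_mod_cast hn
  have hlap' : ∀ x ∈ ball (0 : EuclideanSpace ℝ (Fin n)) (1/2),
      (∑ j, fderiv ℝ (fun y => fderiv ℝ u y (EuclideanSpace.single j 1)) x
        (EuclideanSpace.single j 1)) = v x :=
    fun x hx => hlap x (ball_subset_closedBall hx)
  have hB' : ∀ x ∈ ball (0 : EuclideanSpace ℝ (Fin n)) (1/2), |v x| ≤ B :=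
    fun x hx => hB x (ball_subset_closedBall hx)
  have hdiffball : ∀ x ∈ ball (0 : EuclideanSpace ℝ (Fin n)) (1/2), DifferentiableAt ℝ u x := by
    intro x hx
    have : ContDiffAt ℝ 2 u x :=
      hu.contDiffAt (Filter.mem_of_superset (isOpen_ball.mem_nhds hx) ball_subset_closedBall)
    exact this.differentiableAt two_ne_zero
  -- coordinatewise bound
  have hcoord : ∀ i : Fin n,
      |fderiv ℝ u 0 (EuclideanSpace.single i 1)| ≤ 2*n*A + B/4 := by
    intro i
    rw [abs_le]
    refine ⟨?_, coord_bound i u v A B hu hlap' hA hB'⟩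
    -- apply the bound to -u, -v
    have hneg : fderiv ℝ (fun x => -u x) 0 (EuclideanSpace.single i 1) ≤ 2*n*A + B/4 := by
      apply coord_bound i (fun x => -u x) (fun x => -v x) A B hu.neg
      · intro x hx
        have hterm : ∀ j : Fin n,
            fderiv ℝ (fun y => fderiv ℝ (fun z => -u z) y (EuclideanSpace.single j 1)) x
              (EuclideanSpace.single j 1)
            = -(fderiv ℝ (fun y => fderiv ℝ u y (EuclideanSpace.single j 1)) x
              (EuclideanSpace.single j 1)) := by
          intro j
          have h1 : (fun y => fderiv ℝ (fun z => -u z) y (EuclideanSpace.single j 1))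
              = fun y => -(fderiv ℝ u y (EuclideanSpace.single j 1)) := by
            funext y
            rw [fderiv_fun_neg]
            simp
          rw [h1, fderiv_fun_neg]
          simp
        rw [Finset.sum_congr rfl fun j _ => hterm j, Finset.sum_neg_distrib, hlap' x hx]
      · intro x hx; simpa using hA x hx
      · intro x hx; simpa using hB' x hx
    have heq : fderiv ℝ (fun x => -u x) 0 (EuclideanSpace.single i 1)
        = -(fderiv ℝ u 0 (EuclideanSpace.single i 1)) := by
      rw [fderiv_fun_neg]; simp
    rw [heq] at hneg
    linarith
  -- translate to the gradient
  have hrepr : ∀ z : EuclideanSpace ℝ (Fin n), fderiv ℝ u 0 z = inner ℝ (gradient u 0) z := by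
    intro z
    have h0 : gradient u 0 = (InnerProductSpace.toDual ℝ _).symm (fderiv ℝ u 0) := rfl
    have h1 : fderiv ℝ u 0 = InnerProductSpace.toDual ℝ _ (gradient u 0) := by
      rw [h0, LinearIsometryEquiv.apply_symm_apply]
    rw [h1, InnerProductSpace.toDual_apply_apply]
  have hyi : ∀ i : Fin n, (gradient u 0) i = fderiv ℝ u 0 (EuclideanSpace.single i 1) := by
    intro i
    rw [hrepr, EuclideanSpace.inner_single_right]
    simp
  set M : ℝ := 2*n*A + B/4 with hM
  have hM0 : 0 ≤ M := by
    rw [hM]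
    have : (0:ℝ) ≤ (n:ℝ) := by positivity
    nlinarith
  have hnorm2 : ‖gradient u 0‖^2 ≤ ((n:ℝ)*M)^2 := by
    rw [norm_sq_eq_sumsq]
    have hterm : ∀ i : Fin n, ((gradient u 0) i)^2 ≤ M^2 := by
      intro i
      have h2' : |(gradient u 0) i| ≤ M := by rw [hyi i]; exact hcoord i
      have h2 := abs_le.mp h2'
      exact sq_le_sq' (by linarith [h2.1]) h2.2
    calc ∑ i, ((gradient u 0) i)^2 ≤ ∑ _i : Fin n, M^2 :=
          Finset.sum_le_sum fun i _ => hterm i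
      _ = n * M^2 := by simp [Finset.sum_const, Finset.card_univ]
      _ ≤ ((n:ℝ)*M)^2 := by nlinarith
  have hnorm : ‖gradient u 0‖ ≤ (n:ℝ) * M := by
    have h3 : ‖gradient u 0‖ = Real.sqrt (‖gradient u 0‖^2) :=
      (Real.sqrt_sq (norm_nonneg _)).symm
    rw [h3]
    calc Real.sqrt (‖gradient u 0‖^2) ≤ Real.sqrt (((n:ℝ)*M)^2) :=
          Real.sqrt_le_sqrt hnorm2
      _ = (n:ℝ)*M := Real.sqrt_sq (by positivity)
  refine le_trans hnorm ?_
  rw [hM]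
  have hNA : 0 ≤ (n:ℝ)*A := by positivity
  have hNB : 0 ≤ (n:ℝ)*B := by positivity
  have hNNB : 0 ≤ (n:ℝ)*(n:ℝ)*B := by positivity
  have hNNA : 0 ≤ (n:ℝ)*(n:ℝ)*A := by positivity
  nlinarith
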